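/- arXiv:1508.06908 — 3 statements merged into one kernel-verified Lean document; each statement's English description precedes it below -/
import Mathlib

section
/- Let N ≥ 1 and let A be a symmetric real N×N matrix. Then there exists an orthonormal basis v_1, …, v_N of ℝ^N consisting of isotropic vectors for A (i.e. ⟨A v_i, v_i⟩ = 0 for all i) if and only if tr A = 0. -/
open scoped RealInnerProductSpace
open Module

section aux

variable {E : Type*} [NormedAddCommGroup E] [InnerProductSpace ℝ E]

/-- Trace of an endomorphism as a sum over an orthonormal basis. -/
lemma trace_eq_sum_inner_onb [FiniteDimensional ℝ E] {ι : Type*} [Fintype ι] [DecidableEq ι]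
    (b : OrthonormalBasis ι ℝ E) (T : E →ₗ[ℝ] E) :
    LinearMap.trace ℝ E T = ∑ i, ⟪T (b i), b i⟫ := by
  rw [LinearMap.trace_eq_matrix_trace ℝ b.toBasis T, Matrix.trace]
  refine Finset.sum_congr rfl fun i _ => ?_
  rw [Matrix.diag_apply, LinearMap.toMatrix_apply, OrthonormalBasis.coe_toBasis,
    OrthonormalBasis.coe_toBasis_repr_apply, OrthonormalBasis.repr_apply_apply,
    real_inner_comm]

/-- Extend an orthonormal basis of `(ℝ ∙ v)ᗮ` by the unit vector `v`. -/
lemma exists_onb_cons [FiniteDimensional ℝ E] {n : ℕ} (hn : finrank ℝ E = n + 1)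
    {v : E} (hv : ‖v‖ = 1) (w : OrthonormalBasis (Fin n) ℝ ((ℝ ∙ v)ᗮ : Submodule ℝ E)) :
    ∃ c : OrthonormalBasis (Fin (n + 1)) ℝ E,
      ⇑c = Fin.cons v (fun i => ((w i : E))) := by
  set f : Fin (n + 1) → E := Fin.cons v (fun i => ((w i : E))) with hf
  have horth : Orthonormal ℝ f := by
    rw [orthonormal_iff_ite]
    intro i j
    refine Fin.cases ?_ ?_ i <;> [skip; intro i'] <;> refine Fin.cases ?_ ?_ j <;>
      try intro j'
    · simp only [hf, Fin.cons_zero, if_pos rfl]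
      rw [real_inner_self_eq_norm_sq, hv]; norm_num
    · simp only [hf, Fin.cons_zero, Fin.cons_succ]
      rw [if_neg (by simp [Fin.ext_iff])]
      exact ((w j').2 v (Submodule.mem_span_singleton_self v)).symm ▸
        ((w j').2 v (Submodule.mem_span_singleton_self v))
    · simp only [hf, Fin.cons_zero, Fin.cons_succ]
      rw [if_neg (by simp [Fin.ext_iff])]
      rw [real_inner_comm]
      exact (w i').2 v (Submodule.mem_span_singleton_self v)
    · simp only [hf, Fin.cons_succ]
      rw [← Submodule.coe_inner]
      rw [orthonormal_iff_ite.1 w.orthonormal i' j']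
      simp [Fin.succ_inj]
  have hcard : Fintype.card (Fin (n + 1)) = finrank ℝ E := by simp [hn]
  refine ⟨((basisOfOrthonormalOfCardEqFinrank horth hcard).toOrthonormalBasis
    (by rwa [coe_basisOfOrthonormalOfCardEqFinrank])), ?_⟩
  rw [Basis.coe_toOrthonormalBasis, coe_basisOfOrthonormalOfCardEqFinrank]

end aux

set_option maxHeartbeats 1000000 in
/-- Key lemma: a symmetric endomorphism with trace zero admits an isotropic orthonormal basis. -/
lemma key_isotropic : ∀ (n : ℕ) (E : Type) [NormedAddCommGroup E] [InnerProductSpace ℝ E]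
    [FiniteDimensional ℝ E], finrank ℝ E = n → ∀ (T : E →ₗ[ℝ] E), T.IsSymmetric →
    LinearMap.trace ℝ E T = 0 →
    ∃ b : OrthonormalBasis (Fin n) ℝ E, ∀ i, ⟪T (b i), b i⟫ = 0 := by
  intro n
  induction n with
  | zero =>
    intro E _ _ _ hn T hT htr
    have hsub : Subsingleton E := finrank_zero_iff.mp hn
    have horth : Orthonormal ℝ (fun i : Fin 0 => (0 : E)) := by
      rw [orthonormal_iff_ite]; exact fun i => i.elim0
    refine ⟨OrthonormalBasis.mk horth ?_, fun i => i.elim0⟩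
    rw [Subsingleton.elim (Submodule.span ℝ (Set.range fun i : Fin 0 => (0 : E))) ⊤]
  | succ n ih =>
    intro E _ _ _ hn T hT htr
    -- eigenbasis
    set e := hT.eigenvectorBasis hn with he
    set μ := hT.eigenvalues hn with hμ
    have happ : ∀ i, T (e i) = μ i • e i := fun i => hT.apply_eigenvectorBasis hn i
    have hinner : ∀ i, ⟪T (e i), e i⟫ = μ i := by
      intro i
      rw [happ, real_inner_smul_left, real_inner_self_eq_norm_sq, e.orthonormal.1 i]
      ring
    have hsum : ∑ i, μ i = 0 := by
      rw [← htr, trace_eq_sum_inner_onb e T]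
      exact Finset.sum_congr rfl fun i _ => (hinner i).symm
    -- an isotropic unit vector
    obtain ⟨i0, hi0⟩ := Finite.exists_max μ
    obtain ⟨j0, hj0⟩ := Finite.exists_min μ
    have hle : μ j0 ≤ 0 := by
      by_contra h
      have : (0:ℝ) < ∑ i, μ i :=
        Finset.sum_pos (fun i _ => lt_of_lt_of_le (not_le.mp h) (hj0 i)) ⟨i0, Finset.mem_univ i0⟩
      linarith [hsum]
    have hge : 0 ≤ μ i0 := by
      by_contra h
      have : ∑ i, μ i < 0 :=
        Finset.sum_neg (fun i _ => lt_of_le_of_lt (hi0 i) (not_le.mp h)) ⟨i0, Finset.mem_univ i0⟩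
      linarith [hsum]
    have hvex : ∃ v : E, ‖v‖ = 1 ∧ ⟪T v, v⟫ = 0 := by
      by_cases hij : μ i0 = μ j0
      · refine ⟨e i0, e.orthonormal.1 i0, ?_⟩
        rw [hinner]; linarith
      · have hne : i0 ≠ j0 := fun h => hij (by rw [h])
        have hlt : μ j0 < μ i0 := lt_of_le_of_ne (le_trans hle hge) (Ne.symm hij)
        set t : ℝ := μ i0 / (μ i0 - μ j0) with ht
        have ht0 : 0 ≤ t := div_nonneg hge (by linarith)
        have ht1 : t ≤ 1 := by
          rw [ht, div_le_one (by linarith)]; linarith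
        set a : ℝ := Real.sqrt (1 - t) with ha
        set c : ℝ := Real.sqrt t with hc
        have ha2 : a ^ 2 = 1 - t := Real.sq_sqrt (by linarith)
        have hc2 : c ^ 2 = t := Real.sq_sqrt ht0
        set v : E := a • e i0 + c • e j0 with hv
        have hij_inner : ⟪e i0, e j0⟫ = 0 := e.orthonormal.2 hne
        have hji_inner : ⟪e j0, e i0⟫ = 0 := e.orthonormal.2 (Ne.symm hne)
        have hii : ⟪e i0, e i0⟫ = 1 := by
          rw [real_inner_self_eq_norm_sq, e.orthonormal.1 i0]; ring
        have hjj : ⟪e j0, e j0⟫ = 1 := by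
          rw [real_inner_self_eq_norm_sq, e.orthonormal.1 j0]; ring
        have hvv : ⟪v, v⟫ = 1 := by
          rw [hv]
          simp only [inner_add_left, inner_add_right, real_inner_smul_left,
            real_inner_smul_right, hij_inner, hji_inner, hii, hjj]
          nlinarith [ha2, hc2]
        have hnv : ‖v‖ = 1 := by
          have h1 : ‖v‖ ^ 2 = 1 := by rw [← real_inner_self_eq_norm_sq, hvv]
          nlinarith [norm_nonneg v]
        refine ⟨v, hnv, ?_⟩
        have hTv : T v = (a * μ i0) • e i0 + (c * μ j0) • e j0 := by
          rw [hv, map_add, map_smul, map_smul, happ, happ, smul_smul, smul_smul]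
        rw [hTv, hv]
        simp only [inner_add_left, inner_add_right, real_inner_smul_left,
          real_inner_smul_right, hij_inner, hji_inner, hii, hjj]
        have : t * (μ i0 - μ j0) = μ i0 :=
          div_mul_cancel₀ _ (by linarith : μ i0 - μ j0 ≠ 0)
        nlinarith [ha2, hc2, this]
    obtain ⟨v, hv1, hviso⟩ := hvex
    have hv0 : v ≠ 0 := by intro h; rw [h, norm_zero] at hv1; norm_num at hv1
    haveI : Fact (finrank ℝ E = n + 1) := ⟨hn⟩
    set K : Submodule ℝ E := (ℝ ∙ v)ᗮ with hK
    have hfK : finrank ℝ K = n := Submodule.finrank_orthogonal_span_singleton hv0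
    -- compressed operator
    set S : K →ₗ[ℝ] K := (Submodule.orthogonalProjection K).toLinearMap ∘ₗ (T ∘ₗ K.subtype) with hS
    have hSinner : ∀ x y : K, ⟪S x, y⟫ = ⟪T (x : E), (y : E)⟫ := by
      intro x y
      rw [hS]
      simp only [LinearMap.coe_comp, Function.comp_apply, ContinuousLinearMap.coe_coe,
        Submodule.coe_subtype]
      exact Submodule.inner_orthogonalProjection_eq_of_mem_right (K := K) y (T (x : E))
    have hSsymm : S.IsSymmetric := by
      intro x y
      calc ⟪S x, y⟫ = ⟪T (x : E), (y : E)⟫ := hSinner x y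
        _ = ⟪(x : E), T (y : E)⟫ := hT _ _
        _ = ⟪T (y : E), (x : E)⟫ := real_inner_comm _ _
        _ = ⟪S y, x⟫ := (hSinner y x).symm
        _ = ⟪x, S y⟫ := real_inner_comm _ _
    -- trace of S is zero
    set u := OrthonormalBasis.fromOrthogonalSpanSingleton (𝕜 := ℝ) n hv0 with hu
    obtain ⟨c, hc⟩ := exists_onb_cons hn hv1 u
    have htrS : LinearMap.trace ℝ K S = 0 := by
      rw [trace_eq_sum_inner_onb u S]
      have h2 : (0:ℝ) = LinearMap.trace ℝ E T := htr.symm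
      rw [trace_eq_sum_inner_onb c T] at h2
      have h3 : ∑ i : Fin (n+1), ⟪T (c i), c i⟫
          = ⟪T v, v⟫ + ∑ i : Fin n, ⟪T (u i : E), (u i : E)⟫ := by
        rw [show (fun i : Fin (n+1) => ⟪T (c i), c i⟫)
            = Fin.cons ⟪T v, v⟫ (fun i => ⟪T (u i : E), (u i : E)⟫) from ?_]
        · exact Fin.sum_cons _ _
        · funext i
          refine Fin.cases ?_ (fun i' => ?_) i <;> simp [hc]
      rw [h3, hviso, zero_add] at h2
      have h4 : ∑ i : Fin n, ⟪S (u i), u i⟫ = ∑ i : Fin n, ⟪T (u i : E), (u i : E)⟫ :=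
        Finset.sum_congr rfl fun i _ => hSinner (u i) (u i)
      rw [h4]
      exact h2.symm
    obtain ⟨w, hw⟩ := ih K hfK S hSsymm htrS
    obtain ⟨b, hb⟩ := exists_onb_cons hn hv1 w
    refine ⟨b, fun i => ?_⟩
    refine Fin.cases ?_ (fun i' => ?_) i
    · rw [hb]; simpa using hviso
    · rw [hb]
      simp only [Fin.cons_succ]
      rw [← hSinner (w i') (w i')]
      exact hw i'

/-- For `N ≥ 1` and a symmetric real `N×N` matrix `A`, there is an orthonormal basis of
`ℝ^N` consisting of isotropic vectors for `A` iff `tr A = 0`. -/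
theorem exists_isotropic_orthonormal_basis_iff_trace_eq_zero
    (N : ℕ) (hN : 1 ≤ N) (A : Matrix (Fin N) (Fin N) ℝ) (hA : A.IsSymm) :
    (∃ b : OrthonormalBasis (Fin N) ℝ (EuclideanSpace ℝ (Fin N)),
        ∀ i : Fin N, ⟪Matrix.toEuclideanLin A (b i), b i⟫ = 0) ↔ A.trace = 0 := by
  set T := Matrix.toEuclideanLin A with hTdef
  have htr : LinearMap.trace ℝ _ T = A.trace := by
    rw [hTdef, Matrix.toEuclideanLin_eq_toLin,
      LinearMap.trace_eq_matrix_trace ℝ (PiLp.basisFun 2 ℝ (Fin N)),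
      LinearMap.toMatrix_toLin]
  constructor
  · rintro ⟨b, hb⟩
    rw [← htr, trace_eq_sum_inner_onb b T]
    exact Finset.sum_eq_zero fun i _ => hb i
  · intro h
    have hHerm : A.IsHermitian := by
      rw [Matrix.IsHermitian, Matrix.conjTranspose_eq_transpose_of_trivial]
      exact hA
    have hT : T.IsSymmetric := Matrix.isHermitian_iff_isSymmetric.mp hHerm
    exact key_isotropic N (EuclideanSpace ℝ (Fin N)) finrank_euclideanSpace_fin T hT
      (by rw [htr, h])
end

section
/- Let A be a symmetric real N×N matrix, and let v₁ be a unit vector lying in the orthogonal complement (ker A)^⊥ of the kernel of A and satisfying ⟨A v₁, v₁⟩ = 0. Set A₁ := A − v₁ ⊗ (A v₁) − (A v₁) ⊗ v₁, and let V := (span(ker A ∪ {v₁}))^⊥ be the orthogonal complement of the linear span of ker A together with v₁. Then V is invariant under A₁, i.e. A₁ v ∈ V for every v ∈ V. -/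
open scoped RealInnerProductSpace

lemma vecMulVec_toEuclideanLin (N : ℕ) (a b : EuclideanSpace ℝ (Fin N))
    (v : EuclideanSpace ℝ (Fin N)) :
    Matrix.toEuclideanLin (Matrix.vecMulVec a b) v = ⟪b, v⟫ • a := by
  ext i
  simp [Matrix.toEuclideanLin_apply, Matrix.mulVec, Matrix.vecMulVec, dotProduct,
    PiLp.inner_apply, RCLike.inner_apply, Finset.sum_mul, mul_comm, mul_left_comm]
  rw [Finset.mul_sum]; simp only [mul_assoc]

/-- If `v₁ ∈ (ker A)ᗮ` is a unit isotropic vector for the symmetric matrix `A`,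
`A₁ = A − v₁ ⊗ (A v₁) − (A v₁) ⊗ v₁`, and `V = (span(ker A ∪ {v₁}))ᗮ`, then `V` is
invariant under `A₁`. -/
theorem reduced_matrix_invariant_subspace
    (N : ℕ) (A : Matrix (Fin N) (Fin N) ℝ) (hA : A.IsSymm)
    (v₁ : EuclideanSpace ℝ (Fin N)) (hv₁ : ‖v₁‖ = 1)
    (hv₁mem : v₁ ∈ (LinearMap.ker (Matrix.toEuclideanLin A))ᗮ)
    (hiso : ⟪Matrix.toEuclideanLin A v₁, v₁⟫ = 0) :
    ∀ v ∈ (LinearMap.ker (Matrix.toEuclideanLin A) ⊔ Submodule.span ℝ {v₁})ᗮ,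
      Matrix.toEuclideanLin
          (A - Matrix.vecMulVec v₁ (A.mulVec v₁) - Matrix.vecMulVec (A.mulVec v₁) v₁) v
        ∈ (LinearMap.ker (Matrix.toEuclideanLin A) ⊔ Submodule.span ℝ {v₁})ᗮ := by
  intro v hv
  set T := Matrix.toEuclideanLin A with hT
  have hHerm : A.IsHermitian := by
    rwa [Matrix.IsHermitian, Matrix.conjTranspose_eq_transpose_of_trivial]
  have hsym : T.IsSymmetric := Matrix.isHermitian_iff_isSymmetric.mp hHerm
  have hv1 : ⟪v₁, v⟫ = 0 :=
    hv v₁ (Submodule.mem_sup_right (Submodule.mem_span_singleton_self v₁))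
  have hAv1 : (WithLp.toLp 2 (Matrix.mulVec A v₁) : EuclideanSpace ℝ (Fin N)) = T v₁ := rfl
  have himg : Matrix.toEuclideanLin
      (A - Matrix.vecMulVec v₁ (A.mulVec v₁) - Matrix.vecMulVec (A.mulVec v₁) v₁) v
      = T v - ⟪T v₁, v⟫ • v₁ := by
    rw [map_sub, map_sub, LinearMap.sub_apply, LinearMap.sub_apply,
      vecMulVec_toEuclideanLin, vecMulVec_toEuclideanLin, hAv1, hv1, zero_smul, sub_zero]
  rw [himg, Submodule.mem_orthogonal]
  intro u hu
  obtain ⟨w, hw, z, hz, rfl⟩ := Submodule.mem_sup.mp hu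
  obtain ⟨c, rfl⟩ := Submodule.mem_span_singleton.mp hz
  have hwker : T w = 0 := hw
  have hwv : ⟪w, T v⟫ = 0 := by rw [← hsym, hwker, inner_zero_left]
  have hwv1 : ⟪w, v₁⟫ = 0 := hv₁mem w hw
  have hv1v1 : ⟪v₁, v₁⟫ = (1 : ℝ) := by
    rw [real_inner_self_eq_norm_sq, hv₁]; norm_num
  have hsv : ⟪v₁, T v⟫ = ⟪T v₁, v⟫ := (hsym v₁ v).symm
  simp [inner_add_left, inner_sub_right, inner_smul_left, inner_smul_right,
    hwv, hwv1, hv1v1, hsv]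
  rw [hv₁]; ring
end

section
/- Let N ≥ 1 and let M be any real N×N matrix. Then there exists an orthonormal basis v_1, …, v_N of ℝ^N such that ⟨M v_i, v_i⟩ = (tr M)/N for every i = 1, …, N; in particular, Σ_{i=1}^N |⟨M v_i, v_i⟩| = |tr M| for this basis. -/
open scoped RealInnerProductSpace
open Module

lemma trace_eq_sum_inner {E : Type} [NormedAddCommGroup E] [InnerProductSpace ℝ E]
    [FiniteDimensional ℝ E] {ι : Type} [Fintype ι] [DecidableEq ι]
    (b : OrthonormalBasis ι ℝ E) (T : E →ₗ[ℝ] E) :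
    LinearMap.trace ℝ E T = ∑ i, ⟪T (b i), b i⟫ := by
  rw [LinearMap.trace_eq_matrix_trace ℝ b.toBasis, Matrix.trace]
  congr 1
  ext i
  rw [Matrix.diag_apply, LinearMap.toMatrix_apply, b.coe_toBasis, b.coe_toBasis_repr_apply,
    b.repr_apply_apply, real_inner_comm]

lemma exists_unit_inner_eq {E : Type} [NormedAddCommGroup E] [InnerProductSpace ℝ E] [FiniteDimensional ℝ E] {n : ℕ} (hn : finrank ℝ E = n)
    (hn1 : 1 ≤ n) {T : E →ₗ[ℝ] E} (hT : T.IsSymmetric) {μ : ℝ}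
    (hμ : LinearMap.trace ℝ E T = n * μ) :
    ∃ v : E, ‖v‖ = 1 ∧ ⟪T v, v⟫ = μ := by
  have hne : Nonempty (Fin n) := Fin.pos_iff_nonempty.mp hn1
  set e := hT.eigenvectorBasis hn with he
  set lam := fun i => hT.eigenvalues hn i with hlam
  have hTe : ∀ i, T (e i) = lam i • e i := fun i => hT.apply_eigenvectorBasis hn i
  have hinner : ∀ i, ⟪T (e i), e i⟫ = lam i := by
    intro i
    rw [hTe i, real_inner_smul_left, real_inner_self_eq_norm_sq, e.orthonormal.1 i]
    simp
  have hsum : ∑ i, lam i = n * μ := by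
    rw [← hμ, trace_eq_sum_inner e T]
    exact (Finset.sum_congr rfl fun i _ => (hinner i).symm)
  -- min and max
  obtain ⟨i0, hi0⟩ := Finset.exists_min_image Finset.univ lam ⟨Classical.arbitrary _, Finset.mem_univ _⟩
  obtain ⟨j0, hj0⟩ := Finset.exists_max_image Finset.univ lam ⟨Classical.arbitrary _, Finset.mem_univ _⟩
  have hmin : lam i0 ≤ μ := by
    by_contra h
    push_neg at h
    have : (n : ℝ) * μ < ∑ i, lam i := by
      calc (n:ℝ) * μ = ∑ _i : Fin n, μ := by simp [mul_comm]
      _ < ∑ i, lam i := Finset.sum_lt_sum_of_nonempty (Finset.univ_nonempty) fun i _ =>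
          lt_of_lt_of_le h (hi0.2 i (Finset.mem_univ _))
    linarith [hsum]
  have hmax : μ ≤ lam j0 := by
    by_contra h
    push_neg at h
    have : ∑ i, lam i < (n : ℝ) * μ := by
      calc ∑ i, lam i < ∑ _i : Fin n, μ := Finset.sum_lt_sum_of_nonempty (Finset.univ_nonempty)
            fun i _ => lt_of_le_of_lt (hj0.2 i (Finset.mem_univ _)) h
      _ = (n:ℝ) * μ := by simp [mul_comm]
    linarith [hsum]
  by_cases hij : lam i0 = μ
  · exact ⟨e i0, e.orthonormal.1 i0, by rw [hinner i0, hij]⟩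
  have hlt : lam i0 < μ := lt_of_le_of_ne hmin hij
  have hne' : i0 ≠ j0 := fun h => by rw [h] at hlt; exact absurd rfl (ne_of_lt (lt_of_lt_of_le hlt hmax))
  -- IVT on f t = cos² t * lam i0 + sin² t * lam j0
  set f : ℝ → ℝ := fun t => (Real.cos t)^2 * lam i0 + (Real.sin t)^2 * lam j0 with hf
  have hcont : ContinuousOn f (Set.Icc 0 (Real.pi/2)) := by fun_prop
  have hf0 : f 0 = lam i0 := by simp [hf]
  have hfpi : f (Real.pi/2) = lam j0 := by simp [hf]
  have : μ ∈ Set.Icc (f 0) (f (Real.pi/2)) := by rw [hf0, hfpi]; exact ⟨hmin, hmax⟩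
  obtain ⟨t, _, ht⟩ := intermediate_value_Icc (by positivity) hcont this
  refine ⟨Real.cos t • e i0 + Real.sin t • e j0, ?_, ?_⟩
  · have := e.orthonormal
    rw [← Real.sqrt_one, ← Real.sqrt_sq (norm_nonneg _)]
    congr 1
    rw [← real_inner_self_eq_norm_sq]
    simp only [inner_add_left, inner_add_right, real_inner_smul_left, real_inner_smul_right]
    have h1 : ⟪e i0, e i0⟫ = 1 := real_inner_self_eq_norm_sq (e i0) ▸ by rw [this.1 i0]; norm_num
    have h2 : ⟪e j0, e j0⟫ = 1 := real_inner_self_eq_norm_sq (e j0) ▸ by rw [this.1 j0]; norm_num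
    have h3 : ⟪e i0, e j0⟫ = 0 := this.2 hne'
    have h4 : ⟪e j0, e i0⟫ = 0 := by rw [real_inner_comm]; exact h3
    rw [h1, h2, h3, h4]
    ring_nf
    nlinarith [Real.sin_sq_add_cos_sq t]
  · simp only [map_add, map_smul, hTe, inner_add_left, inner_add_right, real_inner_smul_left,
      real_inner_smul_right, smul_smul]
    have h1 : ⟪e i0, e i0⟫ = 1 := real_inner_self_eq_norm_sq (e i0) ▸ by rw [e.orthonormal.1 i0]; norm_num
    have h2 : ⟪e j0, e j0⟫ = 1 := real_inner_self_eq_norm_sq (e j0) ▸ by rw [e.orthonormal.1 j0]; norm_num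
    have h3 : ⟪e i0, e j0⟫ = 0 := e.orthonormal.2 hne'
    have h4 : ⟪e j0, e i0⟫ = 0 := by rw [real_inner_comm]; exact h3
    rw [h1, h2, h3, h4]
    rw [← ht]
    simp [hf]
    ring

lemma aux_onb : ∀ (n : ℕ) (E : Type) [NormedAddCommGroup E] [InnerProductSpace ℝ E]
    [FiniteDimensional ℝ E], finrank ℝ E = n → ∀ (T : E →ₗ[ℝ] E), T.IsSymmetric →
    ∃ b : OrthonormalBasis (Fin n) ℝ E,
      ∀ i, ⟪T (b i), b i⟫ = LinearMap.trace ℝ E T / n := by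
  intro n
  induction n with
  | zero =>
    intro E _ _ _ hE T _
    exact ⟨(stdOrthonormalBasis ℝ E).reindex (finCongr hE), fun i => i.elim0⟩
  | succ n IH =>
    intro E _ _ _ hE T hT
    set τ := LinearMap.trace ℝ E T with hτ
    set μ := τ / (n+1 : ℝ) with hμdef
    have hn1 : ((n:ℝ)+1) ≠ 0 := by positivity
    obtain ⟨v, hv, hvμ⟩ := exists_unit_inner_eq hE (Nat.succ_le_succ (Nat.zero_le n)) hT
      (μ := μ) (by push_cast; rw [hμdef, hτ]; field_simp)
    have hv0 : v ≠ 0 := by intro h; rw [h, norm_zero] at hv; norm_num at hv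
    set K := (ℝ ∙ v)ᗮ with hK
    have hKrank : finrank ℝ K = n := by
      have h1 : finrank ℝ (ℝ ∙ v) = 1 := finrank_span_singleton hv0
      have h2 := Submodule.finrank_add_finrank_orthogonal (K := (ℝ ∙ v))
      rw [← hK, hE, h1] at h2
      omega
    set T' : K →ₗ[ℝ] K := (K.orthogonalProjectionOnto).toLinearMap ∘ₗ T ∘ₗ K.subtype with hT'def
    have hT'app : ∀ (x y : K), ⟪T' x, y⟫ = ⟪T (x : E), (y : E)⟫ := by
      intro x y
      show (inner ℝ ((K.orthogonalProjectionOnto (T (x:E))) : K) y : ℝ) = _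
      rw [real_inner_comm, Submodule.inner_orthogonalProjectionOnto_eq_of_mem_left, real_inner_comm]
    have hT'sym : T'.IsSymmetric := by
      intro x y
      rw [hT'app]
      rw [show (inner ℝ x (T' y) : ℝ) = ⟪T' y, x⟫ from real_inner_comm _ _, hT'app,
        real_inner_comm]
      exact (hT ((y : E)) ((x : E))).symm
    obtain ⟨b', hb'⟩ := IH K hKrank T' hT'sym
    -- combined family
    set w : Fin (n+1) → E := Fin.cons v (fun j => (b' j : E)) with hw
    have hvK : ∀ j, ⟪v, (b' j : E)⟫ = 0 := by
      intro j
      have hmem : ((b' j : E)) ∈ (ℝ ∙ v)ᗮ := (b' j).2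
      exact (Submodule.mem_orthogonal _ _).mp hmem v (Submodule.mem_span_singleton_self v)
    have hortho : Orthonormal ℝ w := by
      constructor
      · intro i
        refine Fin.cases ?_ ?_ i
        · simpa [hw] using hv
        · intro j
          simp only [hw, Fin.cons_succ]; exact b'.orthonormal.1 j
      · intro i j hij
        refine Fin.cases (motive := fun i => i ≠ j → ⟪w i, w j⟫ = 0) ?_ ?_ i hij
        · intro h0j
          refine Fin.cases (motive := fun j => 0 ≠ j → ⟪w 0, w j⟫ = 0) ?_ ?_ j h0j
          · intro h; exact absurd rfl h
          · intro j' _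
            simpa [hw] using hvK j'
        · intro i' hi'j
          refine Fin.cases (motive := fun j => i'.succ ≠ j → ⟪w i'.succ, w j⟫ = 0) ?_ ?_ j hi'j
          · intro _
            simp only [hw, Fin.cons_succ, Fin.cons_zero]
            rw [real_inner_comm]
            exact hvK i'
          · intro j' hne
            have : i' ≠ j' := fun h => hne (by rw [h])
            simpa [hw, Submodule.coe_inner] using b'.orthonormal.2 this
    have hcard : Fintype.card (Fin (n+1)) = finrank ℝ E := by simp [hE]
    set bas := basisOfLinearIndependentOfCardEqFinrank hortho.linearIndependent hcard with hbas
    have hbasw : ⇑bas = w := coe_basisOfLinearIndependentOfCardEqFinrank _ _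
    set b : OrthonormalBasis (Fin (n+1)) ℝ E := bas.toOrthonormalBasis (hbasw ▸ hortho) with hb
    have hbw : ∀ i, b i = w i := by
      intro i
      rw [hb, Basis.coe_toOrthonormalBasis, hbasw]
    -- trace computation
    have htr' : LinearMap.trace ℝ K T' = n * μ := by
      have h1 : τ = ∑ i, ⟪T (b i), b i⟫ := trace_eq_sum_inner b T
      have h2 : LinearMap.trace ℝ K T' = ∑ j, ⟪T' (b' j), b' j⟫ := trace_eq_sum_inner b' T'
      have h3 : ∑ i, ⟪T (b i), b i⟫ = ⟪T v, v⟫ + ∑ j, ⟪T' (b' j), b' j⟫ := by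
        rw [Fin.sum_univ_succ]
        congr 1
        · rw [hbw, hw]; simp
        · refine Finset.sum_congr rfl fun j _ => ?_
          rw [hbw, hw, Fin.cons_succ, hT'app]
      have hτμ : τ = ((n:ℝ)+1) * μ := by rw [hμdef]; field_simp
      have hr : ((n:ℝ)+1) * μ = (n:ℝ) * μ + μ := by ring
      linarith [h1, h2, h3, hτμ, hvμ, hr]
    refine ⟨b, fun i => ?_⟩
    have hc : ((n+1 : ℕ) : ℝ) = (n:ℝ)+1 := by push_cast; ring
    rw [hc]
    show ⟪T (b i), b i⟫ = μ
    refine Fin.cases ?_ ?_ i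
    · rw [hbw, hw]; simpa using hvμ
    · intro j
      have hn0 : (n : ℝ) ≠ 0 := by
        have := j.pos
        positivity
      rw [hbw, hw, Fin.cons_succ, ← hT'app, hb' j, htr']
      field_simp


/-- For any real `N×N` matrix `M` (`N ≥ 1`) there is an orthonormal basis `v₁, …, v_N` of
`ℝ^N` with `⟨M vᵢ, vᵢ⟩ = (tr M)/N` for all `i`; in particular
`Σᵢ |⟨M vᵢ, vᵢ⟩| = |tr M|` for this basis. -/
theorem exists_orthonormal_basis_equidistributing_trace
    (N : ℕ) (hN : 1 ≤ N) (M : Matrix (Fin N) (Fin N) ℝ) :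
    ∃ b : OrthonormalBasis (Fin N) ℝ (EuclideanSpace ℝ (Fin N)),
      (∀ i : Fin N, ⟪Matrix.toEuclideanLin M (b i), b i⟫ = M.trace / N) ∧
      ∑ i : Fin N, |⟪Matrix.toEuclideanLin M (b i), b i⟫| = |M.trace| := by
  classical
  set S : Matrix (Fin N) (Fin N) ℝ := (1/2 : ℝ) • (M + Matrix.transpose M) with hS
  have hSH : S.IsHermitian := by
    ext i j
    simp [hS, Matrix.conjTranspose_apply, Matrix.transpose_apply, Matrix.add_apply,
      Matrix.smul_apply]
    ring
  have hsym : (Matrix.toEuclideanLin S).IsSymmetric := Matrix.isHermitian_iff_isSymmetric.mp hSH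
  have htr : LinearMap.trace ℝ (EuclideanSpace ℝ (Fin N)) (Matrix.toEuclideanLin S) = M.trace := by
    rw [Matrix.toEuclideanLin_eq_toLin_orthonormal,
      LinearMap.trace_eq_matrix_trace ℝ (EuclideanSpace.basisFun (Fin N) ℝ).toBasis,
      LinearMap.toMatrix_toLin]
    simp [hS, Matrix.trace_smul, Matrix.trace_add, Matrix.trace_transpose]
    ring
  have hinner : ∀ x : EuclideanSpace ℝ (Fin N),
      ⟪Matrix.toEuclideanLin S x, x⟫ = ⟪Matrix.toEuclideanLin M x, x⟫ := by
    intro x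
    have hTtr : (Matrix.transpose M) = M.conjTranspose := by
      ext i j; simp [Matrix.conjTranspose_apply]
    have hsplit : Matrix.toEuclideanLin S x
        = (1/2 : ℝ) • (Matrix.toEuclideanLin M x + Matrix.toEuclideanLin (Matrix.transpose M) x) := by
      rw [hS, map_smul, map_add]
      simp
    rw [hsplit, real_inner_smul_left, inner_add_left]
    have h2 : ⟪Matrix.toEuclideanLin (Matrix.transpose M) x, x⟫
        = ⟪Matrix.toEuclideanLin M x, x⟫ := by
      rw [hTtr, Matrix.toEuclideanLin_conjTranspose_eq_adjoint, LinearMap.adjoint_inner_left,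
        real_inner_comm]
    rw [h2]; ring
  obtain ⟨b, hb⟩ := aux_onb N (EuclideanSpace ℝ (Fin N)) finrank_euclideanSpace_fin
      (Matrix.toEuclideanLin S) hsym
  have h1 : ∀ i : Fin N, ⟪Matrix.toEuclideanLin M (b i), b i⟫ = M.trace / N := by
    intro i
    rw [← hinner, hb i, htr]
  refine ⟨b, h1, ?_⟩
  have hN0 : (N : ℝ) ≠ 0 := by positivity
  calc ∑ i : Fin N, |⟪Matrix.toEuclideanLin M (b i), b i⟫|
      = ∑ _i : Fin N, |M.trace / N| := Finset.sum_congr rfl fun i _ => by rw [h1 i]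
    _ = N * (|M.trace| / N) := by
        rw [Finset.sum_const, Finset.card_univ, Fintype.card_fin, nsmul_eq_mul, abs_div,
          Nat.abs_cast]
    _ = |M.trace| := by field_simp
end
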